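/- Let 1 ≤ i ≤ g − 2 and let S : H → H be the ℚ-linear map determined by S(b_1) = b_1 + a_2, S(b_2) = b_2 + a_1, and S fixing all other basis vectors (S(a_j) = a_j for all j, S(b_j) = b_j for j ≠ 1, 2). Then: (1) S ∈ Sp(H, ω), and S preserves the ℤ-span of the basis; (2) (⋀^{i+2} S)(a_1∧b_1∧a_3∧⋯∧a_{i+2}) − a_1∧b_1∧a_3∧⋯∧a_{i+2} = a_1∧a_2∧a_3∧⋯∧a_{i+2}; and (3) the element a_1∧a_2∧⋯∧a_{i+2} is nonzero and satisfies C_{i+2}(a_1∧a_2∧⋯∧a_{i+2}) = 0. -/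

import Mathlib

/-- The `2g`-dimensional rational vector space `H = ℚ^{2g}`, with basis indexed by
`Fin g ⊕ Fin g`: `Sum.inl j` corresponds to `a_{j+1}` and `Sum.inr j` to `b_{j+1}`. -/
abbrev HH (g : ℕ) : Type := (Fin g ⊕ Fin g) → ℚ

/-- The basis vector `a_{j+1}` of `H`. -/
def aa (g : ℕ) (j : Fin g) : HH g := Pi.single (Sum.inl j) 1

/-- The basis vector `b_{j+1}` of `H`. -/
def bb (g : ℕ) (j : Fin g) : HH g := Pi.single (Sum.inr j) 1

/-- The standard symplectic form `ω` on `H`. -/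
def omg (g : ℕ) (x y : HH g) : ℚ :=
  ∑ j : Fin g, (x (Sum.inl j) * y (Sum.inr j) - x (Sum.inr j) * y (Sum.inl j))

/-- The wedge `x_1 ∧ ⋯ ∧ x_k`, as an element of the `k`-th exterior power `⋀^k H`. -/
noncomputable def wedge (g k : ℕ) (v : Fin k → HH g) : ⋀[ℚ]^k (HH g) :=
  ⟨ExteriorAlgebra.ιMulti ℚ k v, ExteriorAlgebra.ιMulti_range ℚ k (Set.mem_range_self v)⟩

/-- Given a `k`-tuple `v` and indices `j < l`, the `(k-2)`-tuple obtained from `v` by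
omitting the entries at positions `j` and `l`. -/
def remove2 {α : Type*} {k : ℕ} (v : Fin k → α) (j l : Fin k) : Fin (k - 2) → α :=
  fun t => v ⟨if (t : ℕ) < (j : ℕ) then (t : ℕ)
      else if (t : ℕ) + 1 < (l : ℕ) then (t : ℕ) + 1 else (t : ℕ) + 2, by
    have ht := t.isLt
    have hl := l.isLt
    split_ifs <;> omega⟩

/-- The value `F(x_1, …, x_k) = Σ_{j<l} (-1)^{j+l+1} ω(x_j, x_l) ·
x_1 ∧ ⋯ ∧ x̂_j ∧ ⋯ ∧ x̂_l ∧ ⋯ ∧ x_k ∈ ⋀^{k-2} H`. (Indices are 0-based here, which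
yields the same signs as the 1-based formula.) -/
noncomputable def contractExpr (g k : ℕ) (v : Fin k → HH g) : ⋀[ℚ]^(k - 2) (HH g) :=
  ∑ p ∈ Finset.univ.filter (fun p : Fin k × Fin k => (p.1 : ℕ) < (p.2 : ℕ)),
    ((-1 : ℚ) ^ ((p.1 : ℕ) + (p.2 : ℕ) + 1) * omg g (v p.1) (v p.2)) •
      wedge g (k - 2) (remove2 v p.1 p.2)

/-- `IsContraction g k C` says that `C : ⋀^k H → ⋀^{k-2} H` is the contraction `C_k`,
i.e. the (unique) linear map satisfying the defining formula on wedges. -/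
def IsContraction (g k : ℕ) (C : ⋀[ℚ]^k (HH g) →ₗ[ℚ] ⋀[ℚ]^(k - 2) (HH g)) : Prop :=
  ∀ v : Fin k → HH g, C (wedge g k v) = contractExpr g k v

lemma mapAlg_mem (g k : ℕ) (S : HH g →ₗ[ℚ] HH g) {x : ExteriorAlgebra ℚ (HH g)}
    (hx : x ∈ ⋀[ℚ]^k (HH g)) : ExteriorAlgebra.map S x ∈ ⋀[ℚ]^k (HH g) := by
  rw [← ExteriorAlgebra.ιMulti_span_fixedDegree] at hx ⊢
  have h : Submodule.map (ExteriorAlgebra.map S).toLinearMap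
      (Submodule.span ℚ (Set.range (ExteriorAlgebra.ιMulti ℚ k))) ≤
      Submodule.span ℚ (Set.range (ExteriorAlgebra.ιMulti ℚ k (M := HH g))) := by
    rw [Submodule.map_span, Submodule.span_le]
    rintro _ ⟨_, ⟨v, rfl⟩, rfl⟩
    exact Submodule.subset_span ⟨S ∘ v, (ExteriorAlgebra.map_apply_ιMulti S v).symm⟩
  exact h (Submodule.mem_map_of_mem hx)

/-- The linear map `⋀^k S : ⋀^k H → ⋀^k H` induced by a linear map `S : H → H`. -/
noncomputable def powMap (g k : ℕ) (S : HH g →ₗ[ℚ] HH g) :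
    ⋀[ℚ]^k (HH g) →ₗ[ℚ] ⋀[ℚ]^k (HH g) :=
  (ExteriorAlgebra.map S).toLinearMap.restrict fun _ hx => mapAlg_mem g k S hx

/-! ### Auxiliary lemmas -/

lemma aa_apply (g : ℕ) (j : Fin g) (p : Fin g ⊕ Fin g) :
    aa g j p = if p = Sum.inl j then 1 else 0 := by
  simp [aa, Pi.single_apply]

lemma bb_apply (g : ℕ) (j : Fin g) (p : Fin g ⊕ Fin g) :
    bb g j p = if p = Sum.inr j then 1 else 0 := by
  simp [bb, Pi.single_apply]

/-- Explicit formula for the map `S`. -/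
lemma S_formula (g : ℕ) (h0 : 0 < g) (h1 : 1 < g) (S : HH g →ₗ[ℚ] HH g)
    (hSa : ∀ j, S (aa g j) = aa g j)
    (hSb1 : S (bb g ⟨0, h0⟩) = bb g ⟨0, h0⟩ + aa g ⟨1, h1⟩)
    (hSb2 : S (bb g ⟨1, h1⟩) = bb g ⟨1, h1⟩ + aa g ⟨0, h0⟩)
    (hSb : ∀ j : Fin g, (j : ℕ) ≠ 0 → (j : ℕ) ≠ 1 → S (bb g j) = bb g j) :
    ∀ x : HH g, S x = x + x (Sum.inr ⟨0, h0⟩) • aa g ⟨1, h1⟩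
      + x (Sum.inr ⟨1, h1⟩) • aa g ⟨0, h0⟩ := by
  set T : HH g →ₗ[ℚ] HH g :=
    LinearMap.id + (LinearMap.proj (Sum.inr (⟨0, h0⟩ : Fin g))).smulRight (aa g ⟨1, h1⟩)
      + (LinearMap.proj (Sum.inr (⟨1, h1⟩ : Fin g))).smulRight (aa g ⟨0, h0⟩) with hT
  have hST : S = T := by
    apply (Pi.basisFun ℚ (Fin g ⊕ Fin g)).ext
    intro p
    rw [Pi.basisFun_apply]
    rcases p with j | j
    · have ha : (Pi.single (Sum.inl j) 1 : HH g) = aa g j := rfl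
      rw [ha, hSa]
      simp [hT, aa_apply]
    · have hb : (Pi.single (Sum.inr j) 1 : HH g) = bb g j := rfl
      rw [hb]
      rcases eq_or_ne (j : ℕ) 0 with hj0 | hj0
      · rw [show j = ⟨0, h0⟩ from Fin.ext hj0, hSb1]
        simp [hT, bb_apply, Fin.ext_iff]
      · rcases eq_or_ne (j : ℕ) 1 with hj1 | hj1
        · rw [show j = ⟨1, h1⟩ from Fin.ext hj1, hSb2]
          simp [hT, bb_apply, Fin.ext_iff]
        · rw [hSb j hj0 hj1]
          have e0 : (Sum.inr (⟨0, h0⟩ : Fin g) : Fin g ⊕ Fin g) ≠ Sum.inr j := by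
            simp only [ne_eq, Sum.inr.injEq, Fin.ext_iff]
            omega
          have e1 : (Sum.inr (⟨1, h1⟩ : Fin g) : Fin g ⊕ Fin g) ≠ Sum.inr j := by
            simp only [ne_eq, Sum.inr.injEq, Fin.ext_iff]
            omega
          simp [hT, bb_apply, e0, e1]
  intro x
  rw [hST]
  simp [hT]

lemma S_inr (g : ℕ) (h0 : 0 < g) (h1 : 1 < g) (S : HH g →ₗ[ℚ] HH g)
    (hS : ∀ x : HH g, S x = x + x (Sum.inr ⟨0, h0⟩) • aa g ⟨1, h1⟩
      + x (Sum.inr ⟨1, h1⟩) • aa g ⟨0, h0⟩) (x : HH g) (j : Fin g) :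
    S x (Sum.inr j) = x (Sum.inr j) := by
  rw [hS]
  simp [aa_apply]

lemma S_inl (g : ℕ) (h0 : 0 < g) (h1 : 1 < g) (S : HH g →ₗ[ℚ] HH g)
    (hS : ∀ x : HH g, S x = x + x (Sum.inr ⟨0, h0⟩) • aa g ⟨1, h1⟩
      + x (Sum.inr ⟨1, h1⟩) • aa g ⟨0, h0⟩) (x : HH g) (j : Fin g) :
    S x (Sum.inl j) = x (Sum.inl j)
      + x (Sum.inr ⟨0, h0⟩) * (if j = ⟨1, h1⟩ then 1 else 0)
      + x (Sum.inr ⟨1, h1⟩) * (if j = ⟨0, h0⟩ then 1 else 0) := by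
  rw [hS]
  simp [aa_apply]

lemma omg_S (g : ℕ) (h0 : 0 < g) (h1 : 1 < g) (S : HH g →ₗ[ℚ] HH g)
    (hS : ∀ x : HH g, S x = x + x (Sum.inr ⟨0, h0⟩) • aa g ⟨1, h1⟩
      + x (Sum.inr ⟨1, h1⟩) • aa g ⟨0, h0⟩) (x y : HH g) :
    omg g (S x) (S y) = omg g x y := by
  rw [← sub_eq_zero]
  unfold omg
  rw [← Finset.sum_sub_distrib]
  have hsub : (({⟨0, h0⟩, ⟨1, h1⟩} : Finset (Fin g)) : Finset (Fin g)) ⊆ Finset.univ :=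
    Finset.subset_univ _
  rw [← Finset.sum_subset hsub ?vanish]
  case vanish =>
    intro j _ hj
    simp only [Finset.mem_insert, Finset.mem_singleton, not_or] at hj
    rw [S_inl g h0 h1 S hS, S_inl g h0 h1 S hS, S_inr g h0 h1 S hS, S_inr g h0 h1 S hS,
      if_neg hj.1, if_neg hj.2]
    ring
  have hne : (⟨0, h0⟩ : Fin g) ≠ ⟨1, h1⟩ := by simp [Fin.ext_iff]
  rw [Finset.sum_pair hne]
  rw [S_inl g h0 h1 S hS, S_inl g h0 h1 S hS, S_inl g h0 h1 S hS, S_inl g h0 h1 S hS,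
    S_inr g h0 h1 S hS, S_inr g h0 h1 S hS, S_inr g h0 h1 S hS, S_inr g h0 h1 S hS,
    if_pos rfl, if_pos rfl, if_neg hne, if_neg hne.symm]
  ring

lemma omg_aa (g : ℕ) (j l : Fin g) : omg g (aa g j) (aa g l) = 0 := by
  unfold omg
  apply Finset.sum_eq_zero
  intro t _
  simp [aa_apply]

/-- The coordinate-determinant alternating form used to show wedges of independent
basis vectors are nonzero. -/
noncomputable def detForm (g k : ℕ) (hkg : k ≤ g) : (HH g) [⋀^Fin k]→ₗ[ℚ] ℚ :=
  (Matrix.detRowAlternating).compLinearMap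
    (LinearMap.pi fun t : Fin k => LinearMap.proj (Sum.inl ⟨t, lt_of_lt_of_le t.isLt hkg⟩))

lemma wedge_aa_ne_zero (g k : ℕ) (hkg : k ≤ g) (w : Fin k → HH g)
    (hw : ∀ t : Fin k, w t = aa g ⟨t, lt_of_lt_of_le t.isLt hkg⟩) :
    wedge g k w ≠ 0 := by
  intro h
  have hval : ExteriorAlgebra.ιMulti ℚ k w = 0 := congrArg Subtype.val h
  set F : ∀ n, (HH g) [⋀^Fin n]→ₗ[ℚ] ℚ :=
    fun n => if hn : k = n then hn ▸ detForm g k hkg else 0 with hF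
  have h2 := congrArg (ExteriorAlgebra.liftAlternating F) hval
  rw [ExteriorAlgebra.liftAlternating_apply_ιMulti, map_zero] at h2
  have hFk : F k = detForm g k hkg := dif_pos rfl
  rw [hFk] at h2
  have h3 : detForm g k hkg w = 1 := by
    have hM : ∀ s t : Fin k, w s (Sum.inl ⟨t, lt_of_lt_of_le t.isLt hkg⟩)
        = if s = t then 1 else 0 := by
      intro s t
      rw [hw s, aa_apply]
      by_cases hst : s = t
      · subst hst; simp
      · rw [if_neg, if_neg hst]
        simp only [Sum.inl.injEq, Fin.mk.injEq]
        exact fun hc => hst (Fin.ext hc.symm)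
    have hd : detForm g k hkg w = Matrix.det (Matrix.of fun s t : Fin k =>
        w s (Sum.inl ⟨t, lt_of_lt_of_le t.isLt hkg⟩)) := rfl
    rw [hd, show (Matrix.of fun s t : Fin k =>
        w s (Sum.inl ⟨t, lt_of_lt_of_le t.isLt hkg⟩)) = (1 : Matrix (Fin k) (Fin k) ℚ)
        from ?_, Matrix.det_one]
    ext s t
    rw [Matrix.of_apply, hM s t, Matrix.one_apply]
  rw [h3] at h2
  exact one_ne_zero h2

lemma contractExpr_aa (g k : ℕ) (w : Fin k → HH g) (hw : ∀ t, ∃ j, w t = aa g j) :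
    contractExpr g k w = 0 := by
  unfold contractExpr
  apply Finset.sum_eq_zero
  intro p _
  obtain ⟨j1, hj1⟩ := hw p.1
  obtain ⟨j2, hj2⟩ := hw p.2
  rw [hj1, hj2, omg_aa, mul_zero, zero_smul]

lemma part2_lemma (g i : ℕ) (h0 : 0 < g) (h1 : 1 < g) (hig : i + 2 ≤ g)
    (S : HH g →ₗ[ℚ] HH g)
    (hSa : ∀ j, S (aa g j) = aa g j)
    (hSb1 : S (bb g ⟨0, h0⟩) = bb g ⟨0, h0⟩ + aa g ⟨1, h1⟩)
    (v w : Fin (i + 2) → HH g)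
    (hv : ∀ j : Fin (i + 2), v j = if (j : ℕ) = 0 then aa g ⟨0, h0⟩
      else if (j : ℕ) = 1 then bb g ⟨0, h0⟩ else aa g ⟨j, lt_of_lt_of_le j.isLt hig⟩)
    (hw : ∀ t : Fin (i + 2), w t = aa g ⟨t, lt_of_lt_of_le t.isLt hig⟩) :
    powMap g (i + 2) S (wedge g (i + 2) v) - wedge g (i + 2) v = wedge g (i + 2) w := by
  apply Subtype.ext
  have hval : ((powMap g (i + 2) S (wedge g (i + 2) v) : ⋀[ℚ]^(i+2) (HH g)) :
      ExteriorAlgebra ℚ (HH g)) = ExteriorAlgebra.map S (ExteriorAlgebra.ιMulti ℚ (i+2) v) :=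
    rfl
  push_cast [Submodule.coe_sub]
  rw [hval, ExteriorAlgebra.map_apply_ιMulti]
  have one_lt : (1 : ℕ) < i + 2 := by omega
  set i1 : Fin (i + 2) := ⟨1, one_lt⟩ with hi1def
  have hSv : S ∘ v = Function.update v i1 (bb g ⟨0, h0⟩ + aa g ⟨1, h1⟩) := by
    funext j
    simp only [Function.comp_apply, Function.update_apply]
    by_cases hj : j = i1
    · subst hj
      rw [if_pos rfl, hv]
      simp only [hi1def]
      norm_num
      exact hSb1
    · rw [if_neg hj, hv j]
      have hj1 : (j : ℕ) ≠ 1 := fun hc => hj (Fin.ext hc)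
      rcases eq_or_ne (j : ℕ) 0 with hj0 | hj0
      · rw [if_pos hj0]; exact hSa _
      · rw [if_neg hj0, if_neg hj1]; exact hSa _
  have hvv : Function.update v i1 (bb g ⟨0, h0⟩) = v := by
    funext j
    rw [Function.update_apply]
    by_cases hj : j = i1
    · subst hj
      rw [if_pos rfl, hv]
      try simp [hi1def]
    · rw [if_neg hj]
  have hwv : Function.update v i1 (aa g ⟨1, h1⟩) = w := by
    funext j
    rw [Function.update_apply, hw j]
    by_cases hj : j = i1
    · subst hj
      rw [if_pos rfl]
      try simp [hi1def]
    · rw [if_neg hj, hv j]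
      have hj1 : (j : ℕ) ≠ 1 := fun hc => hj (Fin.ext hc)
      rcases eq_or_ne (j : ℕ) 0 with hj0 | hj0
      · rw [if_pos hj0]
        have he : (⟨0, h0⟩ : Fin g) = ⟨(j : ℕ), lt_of_lt_of_le j.isLt hig⟩ :=
          Fin.ext (by simp [hj0])
        rw [he]
      · rw [if_neg hj0, if_neg hj1]
  rw [hSv, AlternatingMap.map_update_add, hvv, hwv,
    show ((wedge g (i + 2) v : ⋀[ℚ]^(i+2) (HH g)) : ExteriorAlgebra ℚ (HH g))
      = ExteriorAlgebra.ιMulti ℚ (i+2) v from rfl,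
    show ((wedge g (i + 2) w : ⋀[ℚ]^(i+2) (HH g)) : ExteriorAlgebra ℚ (HH g))
      = ExteriorAlgebra.ιMulti ℚ (i+2) w from rfl]
  abel

/-- Let `1 ≤ i ≤ g - 2` and let `S : H → H` be the `ℚ`-linear map determined
by `S b_1 = b_1 + a_2`, `S b_2 = b_2 + a_1`, and `S` fixing all other basis vectors.  Then:
(1) `S` is a symplectic automorphism and preserves the `ℤ`-span of the basis;
(2) `(⋀^{i+2} S)(a_1∧b_1∧a_3∧⋯∧a_{i+2}) - a_1∧b_1∧a_3∧⋯∧a_{i+2} = a_1∧a_2∧⋯∧a_{i+2}`;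
(3) `a_1∧a_2∧⋯∧a_{i+2}` is nonzero and `C_{i+2} (a_1∧a_2∧⋯∧a_{i+2}) = 0`. -/
theorem statement5 (g : ℕ) (hg : 2 ≤ g) (i : ℕ) (hi1 : 1 ≤ i) (hi2 : i ≤ g - 2)
    (S : HH g →ₗ[ℚ] HH g)
    (hSa : ∀ j, S (aa g j) = aa g j)
    (hSb1 : S (bb g ⟨0, by omega⟩) = bb g ⟨0, by omega⟩ + aa g ⟨1, by omega⟩)
    (hSb2 : S (bb g ⟨1, by omega⟩) = bb g ⟨1, by omega⟩ + aa g ⟨0, by omega⟩)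
    (hSb : ∀ j : Fin g, (j : ℕ) ≠ 0 → (j : ℕ) ≠ 1 → S (bb g j) = bb g j)
    (C : ⋀[ℚ]^(i + 2) (HH g) →ₗ[ℚ] ⋀[ℚ]^(i + 2 - 2) (HH g))
    (hC : IsContraction g (i + 2) C) :
    (Function.Bijective S ∧ (∀ x y, omg g (S x) (S y) = omg g x y) ∧
      ∀ x ∈ Submodule.span ℤ (Set.range fun p : Fin g ⊕ Fin g => (Pi.single p 1 : HH g)),
        S x ∈ Submodule.span ℤ (Set.range fun p : Fin g ⊕ Fin g => (Pi.single p 1 : HH g))) ∧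
    (powMap g (i + 2) S (wedge g (i + 2) fun j =>
          if (j : ℕ) = 0 then aa g ⟨0, by omega⟩
          else if (j : ℕ) = 1 then bb g ⟨0, by omega⟩
          else aa g ⟨(j : ℕ), by have := j.isLt; omega⟩) -
        wedge g (i + 2) (fun j =>
          if (j : ℕ) = 0 then aa g ⟨0, by omega⟩
          else if (j : ℕ) = 1 then bb g ⟨0, by omega⟩
          else aa g ⟨(j : ℕ), by have := j.isLt; omega⟩) =
      wedge g (i + 2) fun t => aa g ⟨(t : ℕ), by have := t.isLt; omega⟩) ∧
    (wedge g (i + 2) (fun t => aa g ⟨(t : ℕ), by have := t.isLt; omega⟩) ≠ 0 ∧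
      C (wedge g (i + 2) fun t => aa g ⟨(t : ℕ), by have := t.isLt; omega⟩) = 0) := by
  have h0 : 0 < g := by omega
  have h1 : 1 < g := by omega
  have hig : i + 2 ≤ g := by omega
  have hS := S_formula g h0 h1 S hSa hSb1 hSb2 hSb
  refine ⟨⟨?_, ?_, ?_⟩, ?_, ?_, ?_⟩
  · -- bijective
    refine Function.bijective_iff_has_inverse.mpr
      ⟨fun x => x - x (Sum.inr ⟨0, h0⟩) • aa g ⟨1, h1⟩ - x (Sum.inr ⟨1, h1⟩) • aa g ⟨0, h0⟩,
        ?_, ?_⟩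
    · intro x
      dsimp only
      rw [S_inr g h0 h1 S hS, S_inr g h0 h1 S hS, hS x]
      abel
    · intro x
      dsimp only
      have hc0 : (x - x (Sum.inr ⟨0, h0⟩) • aa g ⟨1, h1⟩
          - x (Sum.inr ⟨1, h1⟩) • aa g ⟨0, h0⟩) (Sum.inr ⟨0, h0⟩) = x (Sum.inr ⟨0, h0⟩) := by
        simp [aa_apply]
      have hc1 : (x - x (Sum.inr ⟨0, h0⟩) • aa g ⟨1, h1⟩
          - x (Sum.inr ⟨1, h1⟩) • aa g ⟨0, h0⟩) (Sum.inr ⟨1, h1⟩) = x (Sum.inr ⟨1, h1⟩) := by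
        simp [aa_apply]
      rw [hS, hc0, hc1]
      abel
  · -- symplectic
    exact omg_S g h0 h1 S hS
  · -- preserves ℤ-span
    intro x hx
    set P := Submodule.span ℤ
      (Set.range fun p : Fin g ⊕ Fin g => (Pi.single p 1 : HH g)) with hP
    induction hx using Submodule.span_induction with
    | mem y hy =>
      obtain ⟨p, rfl⟩ := hy
      have hmem : ∀ q : Fin g ⊕ Fin g, (Pi.single q 1 : HH g) ∈ P :=
        fun q => Submodule.subset_span ⟨q, rfl⟩
      rcases p with j | j
      · show S (aa g j) ∈ P
        rw [hSa]
        exact hmem (Sum.inl j)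
      · show S (bb g j) ∈ P
        rcases eq_or_ne (j : ℕ) 0 with hj0 | hj0
        · rw [show j = ⟨0, h0⟩ from Fin.ext hj0, hSb1]
          exact add_mem (hmem (Sum.inr ⟨0, h0⟩)) (hmem (Sum.inl ⟨1, h1⟩))
        · rcases eq_or_ne (j : ℕ) 1 with hj1 | hj1
          · rw [show j = ⟨1, h1⟩ from Fin.ext hj1, hSb2]
            exact add_mem (hmem (Sum.inr ⟨1, h1⟩)) (hmem (Sum.inl ⟨0, h0⟩))
          · rw [hSb j hj0 hj1]
            exact hmem (Sum.inr j)
    | zero => rw [map_zero]; exact zero_mem P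
    | add y z _ _ hy hz => rw [map_add]; exact add_mem hy hz
    | smul n y _ hy => rw [map_zsmul]; exact zsmul_mem hy n
  · -- the wedge computation
    exact part2_lemma g i h0 h1 hig S hSa hSb1 _ _ (fun j => rfl) (fun t => rfl)
  · -- nonzero
    exact wedge_aa_ne_zero g (i + 2) hig _ (fun t => rfl)
  · -- contraction vanishes
    rw [hC]
    exact contractExpr_aa g (i + 2) _ (fun t => ⟨⟨t, by have := t.isLt; omega⟩, rfl⟩)
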